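/- Let A ∈ M(2,ℤ) with real eigenvalues ρ₁, ρ₂, |ρ₁| > |ρ₂|, and let κ = ρ₂/ρ₁ ∈ (-1,1) with κ < 0. Let w₁, w₂ be corresponding eigenvectors and write, in the basis (w₁,w₂), two lines D₁ = ℝ(1,α), D₂ = ℝ(1,-β) with α, β > 0. The cone C bounded by D₁ and D₂ (containing ℝw₁) satisfies A(C) ⊊ C if and only if |κ|α < β < |κ|⁻¹α. -/

import Mathlib

/-- Any interior point of the cone satisfies the strict inequality. -/
lemma interior_cone_lt (α β : ℝ) {q : ℝ × ℝ}
    (hq : q ∈ interior {p : ℝ × ℝ | (p.2 - α * p.1) * (p.2 + β * p.1) ≤ 0}) :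
    (q.2 - α * q.1) * (q.2 + β * q.1) < 0 := by
  have hle : q ∈ {p : ℝ × ℝ | (p.2 - α * p.1) * (p.2 + β * p.1) ≤ 0} := interior_subset hq
  simp only [Set.mem_setOf_eq] at hle
  rcases lt_or_eq_of_le hle with h | h0
  · exact h
  obtain ⟨ε, hε, hball⟩ := Metric.mem_nhds_iff.mp (mem_interior_iff_mem_nhds.mp hq)
  set c : ℝ := (q.2 - α * q.1) + (q.2 + β * q.1) with hc
  set e : ℝ := if 0 ≤ c then ε / 2 else -(ε / 2) with he
  have hec : 0 ≤ e * c := by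
    rcases le_or_gt 0 c with hcc | hcc
    · simp only [he, if_pos hcc]; positivity
    · simp only [he, if_neg (not_le.mpr hcc)]
      nlinarith
  have hene : e ≠ 0 := by
    rcases le_or_gt 0 c with hcc | hcc
    · simp only [he, if_pos hcc]; exact ne_of_gt (by linarith)
    · simp only [he, if_neg (not_le.mpr hcc)]; exact ne_of_lt (by linarith)
  have hee : 0 < e * e := mul_self_pos.mpr hene
  have habs : |e| = ε / 2 := by
    rcases le_or_gt 0 c with hcc | hcc
    · simp only [he, if_pos hcc]; rw [abs_of_pos]; linarith
    · simp only [he, if_neg (not_le.mpr hcc)]; rw [abs_neg, abs_of_pos] <;> linarith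
  have hmem : (q.1, q.2 + e) ∈ Metric.ball q ε := by
    rw [Metric.mem_ball, Prod.dist_eq]
    simp only [Real.dist_eq]
    rw [max_lt_iff]
    constructor
    · simpa using hε
    · have : q.2 + e - q.2 = e := by ring
      rw [this, habs]; linarith
  have hin := hball hmem
  simp only [Set.mem_setOf_eq] at hin
  have key : (q.2 + e - α * q.1) * (q.2 + e + β * q.1) =
      (q.2 - α * q.1) * (q.2 + β * q.1) + e * c + e * e := by rw [hc]; ring
  rw [key, h0] at hin
  linarith

/-- Eigenbasis coordinates: `A` acts by `(x,y) ↦ (ρ₁x, ρ₂y)` with `|ρ₁| > |ρ₂|`,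
`κ = ρ₂/ρ₁ ∈ (-1,0)`.  The cone `C` bounded by the lines `D₁ = ℝ(1,α)` and
`D₂ = ℝ(1,-β)` (with `α, β > 0`) containing `ℝw₁` is mapped strictly into itself
(the nonzero part of `C` goes into the interior of `C`) if and only if
`|κ|α < β < |κ|⁻¹α`. -/
theorem cone_strictly_invariant_iff (ρ₁ ρ₂ α β : ℝ)
    (h : |ρ₂| < |ρ₁|) (hρ₂ : ρ₂ ≠ 0) (hκ : ρ₂ / ρ₁ < 0)
    (hα : 0 < α) (hβ : 0 < β) :
    ((fun p : ℝ × ℝ => (ρ₁ * p.1, ρ₂ * p.2)) ''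
        ({p : ℝ × ℝ | (p.2 - α * p.1) * (p.2 + β * p.1) ≤ 0} \ {0}) ⊆
      interior {p : ℝ × ℝ | (p.2 - α * p.1) * (p.2 + β * p.1) ≤ 0}) ↔
    (|ρ₂ / ρ₁| * α < β ∧ β < |ρ₂ / ρ₁|⁻¹ * α) := by
  have hρ₁ : ρ₁ ≠ 0 := by
    intro h0
    rw [h0, abs_zero] at h
    exact absurd h (not_lt.mpr (abs_nonneg ρ₂))
  set k : ℝ := ρ₂ / ρ₁ with hk
  have hρ₂eq : ρ₂ = k * ρ₁ := by rw [hk, div_mul_cancel₀ ρ₂ hρ₁]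
  have hkneg : k < 0 := hκ
  have habsk : |k| = -k := abs_of_neg hkneg
  constructor
  · intro hsub
    -- apply to (1, α)
    have h1 : ((1 : ℝ), α) ∈ ({p : ℝ × ℝ | (p.2 - α * p.1) * (p.2 + β * p.1) ≤ 0} \ {0}) := by
      constructor
      · simp only [Set.mem_setOf_eq]; nlinarith
      · simp [Prod.ext_iff]
    have hq₁ := interior_cone_lt α β (hsub ⟨(1, α), h1, rfl⟩)
    simp only at hq₁
    -- apply to (1, -β)
    have h2 : ((1 : ℝ), -β) ∈ ({p : ℝ × ℝ | (p.2 - α * p.1) * (p.2 + β * p.1) ≤ 0} \ {0}) := by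
      constructor
      · simp only [Set.mem_setOf_eq]; nlinarith
      · simp [Prod.ext_iff]
    have hq₂ := interior_cone_lt α β (hsub ⟨(1, -β), h2, rfl⟩)
    simp only at hq₂
    have hρsq : (0:ℝ) < ρ₁ ^ 2 := by positivity
    -- rewrite in terms of k
    have e₁ : (ρ₂ * α - α * (ρ₁ * 1)) * (ρ₂ * α + β * (ρ₁ * 1)) =
        ρ₁ ^ 2 * ((k * α - α) * (k * α + β)) := by rw [hρ₂eq]; ring
    have e₂ : (ρ₂ * -β - α * (ρ₁ * 1)) * (ρ₂ * -β + β * (ρ₁ * 1)) =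
        ρ₁ ^ 2 * ((-(k * β) - α) * (-(k * β) + β)) := by rw [hρ₂eq]; ring
    rw [e₁] at hq₁
    rw [e₂] at hq₂
    have f₁ : (k * α - α) * (k * α + β) < 0 := by
      by_contra hcon
      push_neg at hcon
      nlinarith
    have f₂ : (-(k * β) - α) * (-(k * β) + β) < 0 := by
      by_contra hcon
      push_neg at hcon
      nlinarith
    constructor
    · rw [habsk]
      nlinarith
    · rw [habsk, show (-k)⁻¹ * α = α / (-k) by ring,
        lt_div_iff₀ (by linarith : (0:ℝ) < -k)]
      nlinarith
  · rintro ⟨hlo, hhi⟩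
    rw [habsk] at hlo
    rw [habsk, show (-k)⁻¹ * α = α / (-k) by ring,
      lt_div_iff₀ (by linarith : (0:ℝ) < -k)] at hhi
    -- hlo : -k * α < β, hhi : β * -k < α
    intro q hq
    obtain ⟨p, ⟨hpC, hp0⟩, rfl⟩ := hq
    have hcont : Continuous fun p : ℝ × ℝ => (p.2 - α * p.1) * (p.2 + β * p.1) :=
      (continuous_snd.sub (continuous_const.mul continuous_fst)).mul
        (continuous_snd.add (continuous_const.mul continuous_fst))
    have hsub2 : {p : ℝ × ℝ | (p.2 - α * p.1) * (p.2 + β * p.1) < 0} ⊆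
        interior {p : ℝ × ℝ | (p.2 - α * p.1) * (p.2 + β * p.1) ≤ 0} :=
      interior_maximal (fun r hr => le_of_lt (Set.mem_setOf_eq ▸ hr)) (isOpen_lt hcont continuous_const)
    apply hsub2
    simp only [Set.mem_setOf_eq] at hpC ⊢
    set x := p.1
    set y := p.2
    have hxy : ¬(x = 0 ∧ y = 0) := by
      intro ⟨hx0, hy0⟩
      exact hp0 (by
        simp only [Set.mem_singleton_iff, Prod.ext_iff, Prod.fst_zero, Prod.snd_zero]
        exact ⟨hx0, hy0⟩)
    have hgoal : (k * y - α * x) * (k * y + β * x) < 0 := by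
      rcases lt_trichotomy x 0 with hx | hx | hx
      · have hax : 0 < (α + β) * (-x) := mul_pos (add_pos hα hβ) (by linarith)
        have hy1 : α * x ≤ y := by nlinarith [hpC, hax]
        have hy2 : y ≤ -(β * x) := by nlinarith [hpC, hax]
        have g1 : 0 < k * y - α * x := by nlinarith
        have g2 : k * y + β * x < 0 := by nlinarith
        exact mul_neg_of_pos_of_neg g1 g2
      · exfalso
        apply hxy
        refine ⟨hx, ?_⟩
        rw [hx] at hpC
        nlinarith
      · have hax : 0 < (α + β) * x := mul_pos (add_pos hα hβ) hx
        have hy1 : y ≤ α * x := by nlinarith [hpC, hax]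
        have hy2 : -(β * x) ≤ y := by nlinarith [hpC, hax]
        have g1 : k * y - α * x < 0 := by nlinarith
        have g2 : 0 < k * y + β * x := by nlinarith
        exact mul_neg_of_neg_of_pos g1 g2
    have e : (ρ₂ * y - α * (ρ₁ * x)) * (ρ₂ * y + β * (ρ₁ * x)) =
        ρ₁ ^ 2 * ((k * y - α * x) * (k * y + β * x)) := by rw [hρ₂eq]; ring
    rw [e]
    have : (0:ℝ) < ρ₁ ^ 2 := by positivity
    nlinarith
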